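/- Let 1/2 < H < 1 and θ > 1, and set A_r := ∫_0^r e^{v/H} dv = H(e^{r/H} − 1). Then lim_{T → ∞} (H(2H−1)/T) ∫_0^T ∫_0^t e^{−θ(t−u)} e^{(1/H − 1)(u + t)} (A_t − A_u)^{2H−2} du dt = (2H−1) H^{2H} B((θ−1)H + 1, 2H−1), where B denotes the Beta function. (This is the deterministic limit of the correction term I_2^{up} in the proof that the least squares estimator of the drift of the fractional Ornstein–Uhlenbeck process of the second kind is consistent.) -/

import Mathlib

open MeasureTheory Real Filter Set

/-- The complete Beta function `B(x,y) = Γ(x)Γ(y)/Γ(x+y)`. -/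
noncomputable def betaFn (x y : ℝ) : ℝ := Gamma x * Gamma y / Gamma (x + y)


lemma realBeta_eq (a b : ℝ) (ha : 0 < a) (hb : 0 < b) :
    ∫ x in (0:ℝ)..1, x ^ (a - 1) * (1 - x) ^ (b - 1) = betaFn a b := by
  have hcast : ((∫ x in (0:ℝ)..1, x ^ (a - 1) * (1 - x) ^ (b - 1) : ℝ) : ℂ)
      = Complex.betaIntegral a b := by
    rw [← intervalIntegral.integral_ofReal]
    unfold Complex.betaIntegral
    refine intervalIntegral.integral_congr fun x hx => ?_
    rw [Set.uIcc_of_le (by norm_num : (0:ℝ) ≤ 1)] at hx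
    push_cast [Complex.ofReal_cpow hx.1, Complex.ofReal_cpow (by linarith [hx.2] : (0:ℝ) ≤ 1 - x)]
    ring_nf
  have hG : Real.Gamma (a + b) ≠ 0 := (Real.Gamma_pos_of_pos (by linarith)).ne'
  have hGc : Complex.Gamma ((a : ℂ) + b) ≠ 0 := by
    rw [show ((a:ℂ) + b) = ((a + b : ℝ) : ℂ) by push_cast; ring, Complex.Gamma_ofReal]
    exact_mod_cast hG
  have := Complex.Gamma_mul_Gamma_eq_betaIntegral (s := a) (t := b)
    (by simpa using ha) (by simpa using hb)
  have key : Complex.betaIntegral a b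
      = Complex.Gamma a * Complex.Gamma b / Complex.Gamma ((a:ℂ) + b) := by
    field_simp [this]
    rw [this]; ring
  rw [key] at hcast
  have : ((betaFn a b : ℝ) : ℂ)
      = Complex.Gamma a * Complex.Gamma b / Complex.Gamma ((a:ℂ) + b) := by
    unfold betaFn
    push_cast
    rw [← Complex.Gamma_ofReal, ← Complex.Gamma_ofReal, ← Complex.Gamma_ofReal]
    push_cast
    ring_nf
  exact_mod_cast hcast.trans this.symm


lemma cesaro_aux {F : ℝ → ℝ} {L : ℝ}
    (hFi : ∀ T : ℝ, 0 ≤ T → IntervalIntegrable F volume 0 T)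
    (hF : Tendsto F atTop (nhds L)) :
    Tendsto (fun T => (∫ t in (0:ℝ)..T, F t) / T) atTop (nhds L) := by
  rw [Metric.tendsto_atTop]
  intro ε hε
  obtain ⟨M0, hM0⟩ := (Metric.tendsto_atTop.mp hF (ε / 2) (by positivity))
  set M : ℝ := max M0 0 with hMdef
  have hM0' : (0:ℝ) ≤ M := le_max_right _ _
  have hMb : ∀ t, M ≤ t → |F t - L| ≤ ε / 2 := by
    intro t ht
    have := hM0 t (le_trans (le_max_left _ _) ht)
    rw [Real.dist_eq] at this
    linarith [this.le]
  set D : ℝ := |∫ t in (0:ℝ)..M, (F t - L)| with hDdef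
  have hD : 0 ≤ D := abs_nonneg _
  refine ⟨max (M + 1) (2 * D / ε + 1), fun T hT => ?_⟩
  have hTM : M + 1 ≤ T := le_trans (le_max_left _ _) hT
  have hTD : 2 * D / ε + 1 ≤ T := le_trans (le_max_right _ _) hT
  have hT0 : 0 < T := by linarith
  have hMT : M ≤ T := by linarith
  -- integrability pieces
  have hiT : IntervalIntegrable F volume 0 T := hFi T hT0.le
  have hiM : IntervalIntegrable F volume 0 M := hFi M hM0'
  have hiMT : IntervalIntegrable F volume M T := by
    rw [intervalIntegrable_iff_integrableOn_Ioc_of_le hMT]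
    exact ((intervalIntegrable_iff_integrableOn_Ioc_of_le hT0.le).mp hiT).mono_set
      (Set.Ioc_subset_Ioc hM0' le_rfl)
  have hiT' : IntervalIntegrable (fun t => F t - L) volume 0 T :=
    hiT.sub intervalIntegrable_const
  have hiM' : IntervalIntegrable (fun t => F t - L) volume 0 M :=
    hiM.sub intervalIntegrable_const
  have hiMT' : IntervalIntegrable (fun t => F t - L) volume M T :=
    hiMT.sub intervalIntegrable_const
  have hsplit : (∫ t in (0:ℝ)..T, (F t - L))
      = (∫ t in (0:ℝ)..M, (F t - L)) + ∫ t in M..T, (F t - L) :=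
    (intervalIntegral.integral_add_adjacent_intervals hiM' hiMT').symm
  have htail : |∫ t in M..T, (F t - L)| ≤ ε / 2 * |T - M| := by
    have h := intervalIntegral.norm_integral_le_of_norm_le_const
      (C := ε / 2) (f := fun t => F t - L) (a := M) (b := T) ?_
    · simpa [Real.norm_eq_abs] using h
    · intro x hx
      rw [Set.uIoc_of_le hMT] at hx
      simpa [Real.norm_eq_abs] using hMb x hx.1.le
  have hval : (∫ t in (0:ℝ)..T, F t) / T - L = (∫ t in (0:ℝ)..T, (F t - L)) / T := by
    rw [intervalIntegral.integral_sub hiT intervalIntegrable_const,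
      intervalIntegral.integral_const]
    field_simp
    rw [sub_zero, smul_eq_mul]
  rw [Real.dist_eq, hval, hsplit]
  have h1 : |((∫ t in (0:ℝ)..M, (F t - L)) + ∫ t in M..T, (F t - L)) / T|
      ≤ (D + ε / 2 * (T - M)) / T := by
    rw [abs_div, abs_of_pos hT0]
    gcongr
    calc |(∫ t in (0:ℝ)..M, (F t - L)) + ∫ t in M..T, (F t - L)|
          ≤ D + |∫ t in M..T, (F t - L)| := abs_add_le _ _
        _ ≤ D + ε / 2 * (T - M) := by
          have := htail
          rw [abs_of_nonneg (by linarith : (0:ℝ) ≤ T - M)] at this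
          linarith
  refine lt_of_le_of_lt h1 ?_
  rw [div_lt_iff₀ hT0]
  have hDT : D < ε / 2 * T := by
    have : ε * T ≥ 2 * D + ε := by
      have := mul_le_mul_of_nonneg_left hTD hε.le
      calc ε * T ≥ ε * (2 * D / ε + 1) := by nlinarith
        _ = 2 * D + ε := by field_simp
    nlinarith
  nlinarith


noncomputable def auxF (H θ : ℝ) (s : ℝ) : ℝ :=
  H ^ (2 * H - 2) * (exp (-((θ - 1 + 1 / H) * s)) * (1 - exp (-(s / H))) ^ (2 * H - 2))


-- integrability of the real beta integrand on Ioo 0 1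
lemma beta_integrand_integrable (a b : ℝ) (ha : 0 < a) (hb : 0 < b) :
    IntegrableOn (fun x : ℝ => x ^ (a - 1) * (1 - x) ^ (b - 1)) (Ioo 0 1) := by
  have h := (Complex.betaIntegral_convergent (u := a) (v := b)
    (by simpa using ha) (by simpa using hb)).1
  have h2 : IntegrableOn
      (fun x : ℝ => ((x : ℂ) ^ ((a : ℂ) - 1) * (1 - (x : ℂ)) ^ ((b : ℂ) - 1)).re)
      (Ioo 0 1) := (h.mono_set Ioo_subset_Ioc_self).re
  refine h2.congr_fun (fun x hx => ?_) measurableSet_Ioo |>.congr_fun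
    (fun x hx => rfl) measurableSet_Ioo
  have h1 : ((x : ℂ) ^ ((a : ℂ) - 1) * (1 - (x : ℂ)) ^ ((b : ℂ) - 1))
      = ((x ^ (a - 1) * (1 - x) ^ (b - 1) : ℝ) : ℂ) := by
    push_cast [Complex.ofReal_cpow hx.1.le, Complex.ofReal_cpow (by linarith [hx.2] : (0:ℝ) ≤ 1 - x)]
    ring_nf
  rw [h1, Complex.ofReal_re]


section
variable {H θ : ℝ} (hH1 : 1 / 2 < H) (hH2 : H < 1) (hθ : 1 < θ)

lemma exp_rpow' (x y : ℝ) : exp x ^ y = exp (x * y) := by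
  rw [Real.rpow_def_of_pos (exp_pos x), Real.log_exp]


include hH1 hθ in
lemma aux_change :
    IntegrableOn (auxF H θ) (Ioi 0) ∧
    ∫ s in Ioi (0:ℝ), auxF H θ s = H ^ (2 * H - 1) * betaFn ((θ - 1) * H + 1) (2 * H - 1) := by
  have hH0 : (0:ℝ) < H := by linarith
  set φ : ℝ → ℝ := fun s => exp (-(s / H)) with hφdef
  set φ' : ℝ → ℝ := fun s => exp (-(s / H)) * (-(1 / H)) with hφ'def
  set g : ℝ → ℝ := fun z => H ^ (2 * H - 1) * (z ^ ((θ - 1) * H + 1 - 1) * (1 - z) ^ (2 * H - 1 - 1))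
    with hgdef
  have hderiv : ∀ s ∈ Ioi (0:ℝ), HasDerivWithinAt φ (φ' s) (Ioi 0) s := by
    intro s _
    exact (((hasDerivAt_id s).div_const H).neg.exp).hasDerivWithinAt
  have hinj : InjOn φ (Ioi 0) := by
    intro s hs t ht h
    have := Real.exp_eq_exp.mp h
    field_simp at this
    linarith
  have himg : φ '' (Ioi 0) = Ioo 0 1 := by
    ext z
    constructor
    · rintro ⟨s, hs, rfl⟩
      have hs' : (0:ℝ) < s := hs
      exact ⟨exp_pos _, exp_lt_one_iff.mpr (neg_lt_zero.mpr (div_pos hs' hH0))⟩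
    · intro hz
      refine ⟨-(H * Real.log z), ?_, ?_⟩
      · simp only [mem_Ioi, neg_pos]
        exact mul_neg_of_pos_of_neg hH0 (Real.log_neg hz.1 hz.2)
      · show exp (-(-(H * Real.log z) / H)) = z
        rw [show -(-(H * Real.log z) / H) = Real.log z by field_simp]
        exact Real.exp_log hz.1
  have hpt : ∀ s ∈ Ioi (0:ℝ), |φ' s| • g (φ s) = auxF H θ s := by
    intro s hs
    have habs : |φ' s| = exp (-(s / H)) * (1 / H) := by
      rw [hφ'def]
      rw [abs_mul, abs_of_pos (exp_pos _), abs_neg, abs_of_pos (by positivity : (0:ℝ) < 1/H)]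
    have hpow : H ^ (2 * H - 1) = H ^ (2 * H - 2) * H := by
      rw [show 2 * H - 1 = (2 * H - 2) + 1 by ring, Real.rpow_add_one hH0.ne']
    have hmul : exp (-(s / H)) * exp (-(s / H) * ((θ - 1) * H))
        = exp (-((θ - 1 + 1 / H) * s)) := by
      rw [← Real.exp_add]; congr 1; field_simp; ring
    rw [smul_eq_mul, habs, hgdef, hφdef]
    simp only
    unfold auxF
    rw [show (θ - 1) * H + 1 - 1 = (θ - 1) * H by ring,
      show 2 * H - 1 - 1 = 2 * H - 2 by ring, exp_rpow', hpow, ← hmul]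
    field_simp
  have hgint : IntegrableOn g (Ioo 0 1) := by
    unfold g
    exact (beta_integrand_integrable ((θ - 1) * H + 1) (2 * H - 1)
      (by nlinarith) (by linarith)).const_mul _
  constructor
  · have := (integrableOn_image_iff_integrableOn_abs_deriv_smul measurableSet_Ioi hderiv hinj g).mp
      (himg ▸ hgint)
    exact this.congr_fun (fun s hs => hpt s hs) measurableSet_Ioi
  · have h1 : ∫ z in φ '' (Ioi 0), g z = ∫ s in Ioi (0:ℝ), |φ' s| • g (φ s) :=
      integral_image_eq_integral_abs_deriv_smul measurableSet_Ioi hderiv hinj g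
    rw [himg] at h1
    have h2 : ∫ s in Ioi (0:ℝ), auxF H θ s = ∫ z in Ioo (0:ℝ) 1, g z := by
      rw [h1]
      exact setIntegral_congr_fun measurableSet_Ioi (fun s hs => (hpt s hs).symm)
    rw [h2, hgdef]
    simp only
    rw [integral_const_mul]
    congr 1
    rw [← integral_Ioc_eq_integral_Ioo,
      ← intervalIntegral.integral_of_le (by norm_num : (0:ℝ) ≤ 1)]
    exact realBeta_eq _ _ (by nlinarith) (by linarith)
end

/-- Deterministic limit of the correction term `I₂^{up}` in the consistency proof
of the least squares estimator for the fractional Ornstein–Uhlenbeck process of the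
second kind: for `1/2 < H < 1`, `θ > 1` and `A_r := ∫_0^r e^{v/H} dv = H(e^{r/H} − 1)`,
`lim_{T→∞} (H(2H−1)/T) ∫_0^T ∫_0^t e^{−θ(t−u)} e^{(1/H−1)(u+t)} (A_t − A_u)^{2H−2} du dt
  = (2H−1) H^{2H} B((θ−1)H+1, 2H−1)`. -/
theorem fou2_correction_term_limit
    (H θ : ℝ) (hH1 : 1 / 2 < H) (hH2 : H < 1) (hθ : 1 < θ)
    (A : ℝ → ℝ) (hA : ∀ r : ℝ, A r = H * (exp (r / H) - 1)) :
    Tendsto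
      (fun T : ℝ =>
        (H * (2 * H - 1) / T) *
          ∫ t in (0:ℝ)..T, ∫ u in (0:ℝ)..t,
            exp (-θ * (t - u)) * exp ((1 / H - 1) * (u + t)) * (A t - A u) ^ (2 * H - 2))
      atTop
      (nhds ((2 * H - 1) * H ^ (2 * H) * betaFn ((θ - 1) * H + 1) (2 * H - 1))) := by
  have hH0 : (0:ℝ) < H := by linarith
  obtain ⟨hfi, hfval⟩ := aux_change (H := H) (θ := θ) hH1 hθ
  set F : ℝ → ℝ := fun t => ∫ s in (0:ℝ)..t, auxF H θ s with hFdef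
  have hinner : ∀ t : ℝ, 0 ≤ t →
      (∫ u in (0:ℝ)..t,
        exp (-θ * (t - u)) * exp ((1 / H - 1) * (u + t)) * (A t - A u) ^ (2 * H - 2)) = F t := by
    intro t ht
    have h1 : (∫ u in (0:ℝ)..t,
        exp (-θ * (t - u)) * exp ((1 / H - 1) * (u + t)) * (A t - A u) ^ (2 * H - 2))
        = ∫ u in (0:ℝ)..t, auxF H θ (t - u) := by
      refine intervalIntegral.integral_congr fun u hu => ?_
      rw [Set.uIcc_of_le ht] at hu
      obtain ⟨hu0, hut⟩ := hu
      have hw : (0:ℝ) ≤ 1 - exp (-((t - u) / H)) := by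
        have h : exp (-((t - u) / H)) ≤ 1 := Real.exp_le_one_iff.mpr
          (neg_nonpos.mpr (div_nonneg (by linarith) hH0.le))
        linarith
      have he : exp (t / H) * exp (-((t - u) / H)) = exp (u / H) := by
        rw [← Real.exp_add]; congr 1; field_simp; ring
      have hAtu : A t - A u = H * exp (t / H) * (1 - exp (-((t - u) / H))) := by
        rw [hA, hA]; linear_combination H * he
      have hexp : exp (-θ * (t - u)) * exp ((1 / H - 1) * (u + t)) * exp (t / H * (2 * H - 2))
          = exp (-((θ - 1 + 1 / H) * (t - u))) := by
        rw [← Real.exp_add, ← Real.exp_add]; congr 1; field_simp; ring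
      rw [hAtu, Real.mul_rpow (mul_nonneg hH0.le (exp_nonneg _)) hw,
        Real.mul_rpow hH0.le (exp_nonneg _), exp_rpow']
      unfold auxF
      linear_combination (H ^ (2 * H - 2) * (1 - exp (-((t - u) / H))) ^ (2 * H - 2)) * hexp
    rw [h1, intervalIntegral.integral_comp_sub_left (fun s => auxF H θ s) t]
    simp only [sub_self, sub_zero]
    rfl
  have hFi : ∀ T : ℝ, 0 ≤ T → IntervalIntegrable F volume 0 T := by
    intro T hT
    have hfint : IntegrableOn (auxF H θ) (Icc 0 T) := by
      rw [integrableOn_Icc_iff_integrableOn_Ioc]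
      exact hfi.mono_set Set.Ioc_subset_Ioi_self
    have hcont := intervalIntegral.continuousOn_primitive (a := 0) (b := T) hfint
    have hcont2 : ContinuousOn F (Icc 0 T) := by
      refine hcont.congr fun x hx => ?_
      rw [hFdef]
      simp only
      rw [intervalIntegral.integral_of_le hx.1]
    rw [intervalIntegrable_iff_integrableOn_Icc_of_le hT]
    exact hcont2.integrableOn_Icc
  have hT1 : Tendsto F atTop (nhds (∫ s in Ioi (0:ℝ), auxF H θ s)) :=
    intervalIntegral_tendsto_integral_Ioi 0 hfi tendsto_id
  have hces := (cesaro_aux hFi hT1).const_mul (H * (2 * H - 1))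
  have hlim : H * (2 * H - 1) * (∫ s in Ioi (0:ℝ), auxF H θ s)
      = (2 * H - 1) * H ^ (2 * H) * betaFn ((θ - 1) * H + 1) (2 * H - 1) := by
    rw [hfval, show 2 * H = (2 * H - 1) + 1 by ring, Real.rpow_add_one hH0.ne']
    ring
  rw [hlim] at hces
  refine Tendsto.congr' ?_ hces
  filter_upwards [eventually_ge_atTop (0:ℝ)] with T hT
  have h2 : (∫ t in (0:ℝ)..T, ∫ u in (0:ℝ)..t,
      exp (-θ * (t - u)) * exp ((1 / H - 1) * (u + t)) * (A t - A u) ^ (2 * H - 2))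
      = ∫ t in (0:ℝ)..T, F t := by
    refine intervalIntegral.integral_congr fun t htm => ?_
    rw [Set.uIcc_of_le hT] at htm
    exact hinner t htm.1
  rw [h2]
  ring
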